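/- arXiv:1504.07441 — 6 statements merged into one kernel-verified Lean document; each statement's English description precedes it below -/
import Mathlib

section
/- Occ(m,n,1) ≥ m(n−1): there exists a set A of functions from an m-element set to an n-element set, of size m(n−1), such that each function in A is uniquely determined among elements of A by its value at a single point. -/
/-- `Occ(m,n,1) ≥ m(n-1)`: there is a set `A` of functions from an
`m`-element set to an `n`-element set, of size `m(n-1)`, such that each function in `A` is
uniquely determined among elements of `A` by its value at a single point. -/
theorem stmt3 {X Y : Type*} [Fintype X] [Fintype Y] [DecidableEq X] [DecidableEq Y]
    (m n : ℕ) (hm : Fintype.card X = m) (hn : Fintype.card Y = n) :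
    ∃ A : Finset (X → Y), A.card = m * (n - 1) ∧
      ∀ f ∈ A, ∃ x : X, ∀ g ∈ A, g x = f x → g = f := by
  classical
  rcases le_or_gt n 1 with h | h
  · refine ⟨∅, ?_, by simp⟩
    simp [Nat.sub_eq_zero_of_le h]
  · have hY : Nonempty Y := by
      rw [← Fintype.card_pos_iff, hn]; omega
    obtain ⟨y₀⟩ := hY
    set A : Finset (X → Y) :=
      (Finset.univ ×ˢ ({y₀}ᶜ : Finset Y)).image
        (fun p : X × Y => Function.update (fun _ => y₀) p.1 p.2) with hA
    have key : ∀ p : X × Y, p ∈ (Finset.univ ×ˢ ({y₀}ᶜ : Finset Y)) →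
        ∀ q : X × Y, q ∈ (Finset.univ ×ˢ ({y₀}ᶜ : Finset Y)) →
        Function.update (fun _ => y₀) p.1 p.2 p.1 =
          Function.update (fun _ => y₀) q.1 q.2 p.1 → p = q := by
      intro p hp q hq hval
      simp only [Finset.mem_product, Finset.mem_compl, Finset.mem_singleton] at hp hq
      rw [Function.update_self, Function.update_apply] at hval
      by_cases hx : p.1 = q.1
      · simp [hx] at hval
        exact Prod.ext hx hval
      · simp [hx] at hval
        exact absurd hval hp.2
    refine ⟨A, ?_, ?_⟩
    · rw [hA, Finset.card_image_of_injOn, Finset.card_product, Finset.card_univ,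
        Finset.card_compl, Finset.card_singleton, hm, hn]
      intro p hp q hq hpq
      exact key p hp q hq (congrFun hpq p.1)
    · intro f hf
      rw [hA, Finset.mem_image] at hf
      obtain ⟨p, hp, rfl⟩ := hf
      refine ⟨p.1, ?_⟩
      intro g hg hval
      rw [hA, Finset.mem_image] at hg
      obtain ⟨q, hq, rfl⟩ := hg
      have := key q hq p hp ?_
      · rw [this]
      · have hp1q1 : q.1 = p.1 := by
          by_contra hx
          rw [Function.update_apply, if_neg (Ne.symm hx), Function.update_self] at hval
          simp only [Finset.mem_product, Finset.mem_compl, Finset.mem_singleton] at hp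
          exact hp.2 hval.symm
        rw [hp1q1] at hval ⊢
        exact hval
end

section
/- Let A be a set of functions from an m-element set X to an n-element set Y such that every f ∈ A has radius at most r (with the equality order). Then there exists an r-element subset S₀ ⊆ X such that the number of functions in A that are uniquely determined among A by their restriction to S₀ is at least |A| / C(m,r). -/
/-- If every `f ∈ A` has radius at most `r` (equality order, `|X| = m`,
`r ≤ m`), then some `r`-element subset `S₀ ⊆ X` has the property that the number of
functions in `A` uniquely determined among `A` by their restriction to `S₀` is at least
`|A| / C(m,r)` (stated multiplicatively to avoid division). -/
theorem stmt4 {X Y : Type*} [Fintype X] [Fintype Y] [DecidableEq X] [DecidableEq Y]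
    (m r : ℕ) (hm : Fintype.card X = m) (hr : r ≤ m) (A : Finset (X → Y))
    (hA : ∀ f ∈ A, ∃ S : Finset X, S.card ≤ r ∧
      ∀ g ∈ A, (∀ x ∈ S, g x = f x) → g = f) :
    ∃ S₀ : Finset X, S₀.card = r ∧
      A.card ≤ (A.filter (fun f => ∀ g ∈ A, (∀ x ∈ S₀, g x = f x) → g = f)).card *
        Nat.choose m r := by
  classical
  -- For each f ∈ A, pick an r-element superset of an Occam set.
  have hΦ : ∀ f ∈ A, ∃ T : Finset X, T.card = r ∧
      ∀ g ∈ A, (∀ x ∈ T, g x = f x) → g = f := by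
    intro f hf
    obtain ⟨S, hSc, hS⟩ := hA f hf
    obtain ⟨T, hST, hTc⟩ := Finset.exists_superset_card_eq
      (le_trans hSc le_rfl) (hm ▸ hr)
    exact ⟨T, hTc, fun g hg hgf => hS g hg fun x hx => hgf x (hST hx)⟩
  choose! Φ hΦc hΦd using hΦ
  set t : Finset (Finset X) := Finset.univ.powersetCard r with ht
  have htne : t.Nonempty := by
    obtain ⟨T, _, hTc⟩ := Finset.exists_superset_card_eq
      (s := (∅ : Finset X)) (by simp) (hm ▸ hr)
    exact ⟨T, by simp [ht, Finset.mem_powersetCard, hTc]⟩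
  have htcard : t.card = Nat.choose m r := by
    simp [ht, Finset.card_powersetCard, hm]
  have hmaps : ∀ f ∈ A, Φ f ∈ t := fun f hf => by
    simp [ht, Finset.mem_powersetCard, hΦc f hf]
  -- pigeonhole: pick S₀ with maximal fiber
  obtain ⟨S₀, hS₀t, hmax⟩ := t.exists_max_image
    (fun S => (A.filter fun f => Φ f = S).card) htne
  have hS₀c : S₀.card = r := (Finset.mem_powersetCard.mp hS₀t).2
  refine ⟨S₀, hS₀c, ?_⟩
  have hsum : A.card = ∑ S ∈ t, (A.filter fun f => Φ f = S).card :=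
    Finset.card_eq_sum_card_fiberwise hmaps
  have h1 : A.card ≤ (A.filter fun f => Φ f = S₀).card * t.card := by
    rw [hsum]
    calc ∑ S ∈ t, (A.filter fun f => Φ f = S).card
        ≤ ∑ _S ∈ t, (A.filter fun f => Φ f = S₀).card :=
          Finset.sum_le_sum fun S hS => hmax S hS
      _ = (A.filter fun f => Φ f = S₀).card * t.card := by
          rw [Finset.sum_const, smul_eq_mul, mul_comm]
  have h2 : (A.filter fun f => Φ f = S₀) ⊆
      A.filter (fun f => ∀ g ∈ A, (∀ x ∈ S₀, g x = f x) → g = f) := by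
    intro f hf
    rw [Finset.mem_filter] at hf ⊢
    exact ⟨hf.1, hf.2 ▸ hΦd f hf.1⟩
  calc A.card ≤ (A.filter fun f => Φ f = S₀).card * t.card := h1
    _ ≤ _ * Nat.choose m r := by
        rw [htcard]; exact Nat.mul_le_mul_right _ (Finset.card_le_card h2)
end

section
/- Occ(3,n,2) ≥ 4·C(n,2) + n: there exists a set A of functions from a 3-element set to an n-element set, of cardinality 4·C(n,2) + n, such that each f ∈ A is uniquely determined among elements of A by its values on some 2-element subset of the domain. (Construction: for each unordered pair {u,v} of letters take the words uvu, vuv, uuv, vvu, plus the n constant words.) -/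
/-- `Occ(3,n,2) ≥ 4·C(n,2) + n`: there exists a set `A` of functions from a
3-element set `X` to an `n`-element set `Y`, of cardinality `4·C(n,2) + n`, such that each
`f ∈ A` is uniquely determined among elements of `A` by its values on some 2-element subset
of the domain. -/
theorem stmt8 {X Y : Type*} [Fintype X] [Fintype Y] [DecidableEq X] [DecidableEq Y]
    (n : ℕ) (hm : Fintype.card X = 3) (hn : Fintype.card Y = n) :
    ∃ A : Finset (X → Y), A.card = 4 * Nat.choose n 2 + n ∧
      ∀ f ∈ A, ∃ S : Finset X, S.card = 2 ∧
        ∀ g ∈ A, (∀ x ∈ S, g x = f x) → g = f := by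
  classical
  have e : X ≃ Fin 3 := Fintype.equivFinOfCardEq hm
  set x0 := e.symm 0 with hx0def
  set x1 := e.symm 1 with hx1def
  set x2 := e.symm 2 with hx2def
  have hne01 : x0 ≠ x1 := by
    simp only [hx0def, hx1def, ne_eq, EmbeddingLike.apply_eq_iff_eq]; decide
  have hne02 : x0 ≠ x2 := by
    simp only [hx0def, hx2def, ne_eq, EmbeddingLike.apply_eq_iff_eq]; decide
  have hne12 : x1 ≠ x2 := by
    simp only [hx1def, hx2def, ne_eq, EmbeddingLike.apply_eq_iff_eq]; decide
  -- word (u,v,true) = u v u ; word (u,v,false) = u u v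
  set word : (Y × Y) × Bool → (X → Y) := fun p x =>
    if p.2 then (if e x = 1 then p.1.2 else p.1.1)
    else (if e x = 2 then p.1.2 else p.1.1) with hword
  have hw0 : ∀ p, word p x0 = p.1.1 := by
    intro p; simp only [hword, hx0def, Equiv.apply_symm_apply]
    cases p.2 <;> simp
  have hw1 : ∀ p, word p x1 = if p.2 then p.1.2 else p.1.1 := by
    intro p; simp only [hword, hx1def, Equiv.apply_symm_apply]
    cases p.2 <;> simp
  have hw2 : ∀ p, word p x2 = if p.2 then p.1.1 else p.1.2 := by
    intro p; simp only [hword, hx2def, Equiv.apply_symm_apply]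
    cases p.2 <;> simp
  set cn : Y → (X → Y) := fun u _ => u with hcn
  set codes : Finset ((Y × Y) × Bool) :=
    (Finset.univ : Finset Y).offDiag ×ˢ (Finset.univ : Finset Bool) with hcodes
  have hmemcodes : ∀ p : (Y × Y) × Bool, p ∈ codes ↔ p.1.1 ≠ p.1.2 := by
    intro p; simp [hcodes, Finset.mem_offDiag]
  set A : Finset (X → Y) := codes.image word ∪ Finset.univ.image cn with hA
  -- elements of word-image are not constants
  have hnotcn : ∀ p ∈ codes, ∀ u : Y, word p ≠ cn u := by
    intro p hp u h
    rw [hmemcodes] at hp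
    have h0 := congrFun h x0
    have h1 := congrFun h x1
    have h2 := congrFun h x2
    rw [hw0] at h0
    rw [hw1] at h1
    rw [hw2] at h2
    simp only [hcn] at h0 h1 h2
    cases hb : p.2 <;> rw [hb] at h1 h2 <;> simp at h1 h2
    · exact hp (h0.trans h2.symm)
    · exact hp (h0.trans h1.symm)
  -- injectivity of word on codes
  have hinj : Set.InjOn word codes := by
    intro p hp q hq h
    rw [Finset.mem_coe, hmemcodes] at hp hq
    have h0 := congrFun h x0
    have h1 := congrFun h x1
    have h2 := congrFun h x2
    rw [hw0, hw0] at h0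
    rw [hw1, hw1] at h1
    rw [hw2, hw2] at h2
    cases hb : p.2 <;> cases hb' : q.2 <;> rw [hb, hb'] at h1 h2 <;> simp at h1 h2
    · exact Prod.ext (Prod.ext h0 h2) (hb.trans hb'.symm)
    · exact absurd (h0.trans h2.symm) hp
    · exact absurd (h0.trans h1.symm) hp
    · exact Prod.ext (Prod.ext h0 h1) (hb.trans hb'.symm)
  have hcninj : Function.Injective cn := by
    intro a b h; exact congrFun h x0
  have hdisj : Disjoint (codes.image word) (Finset.univ.image cn) := by
    rw [Finset.disjoint_left]
    rintro f hf hf'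
    obtain ⟨p, hp, rfl⟩ := Finset.mem_image.mp hf
    obtain ⟨u, _, hu⟩ := Finset.mem_image.mp hf'
    exact hnotcn p hp u hu.symm
  refine ⟨A, ?_, ?_⟩
  · rw [hA, Finset.card_union_of_disjoint hdisj,
      Finset.card_image_of_injOn hinj, Finset.card_image_of_injective _ hcninj,
      hcodes, Finset.card_product, Finset.offDiag_card]
    simp only [Finset.card_univ, hn, Fintype.card_bool]
    have h2 : 2 * Nat.choose n 2 = n * (n - 1) := by
      rw [Nat.choose_two_right]
      have hev : Even (n * (n - 1)) := by
        rcases n with _ | m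
        · simp
        · simpa [Nat.mul_comm] using Nat.even_mul_succ_self m
      obtain ⟨r, hr⟩ := hev
      omega
    have h3 : n * (n - 1) = n * n - n := by rw [Nat.mul_sub, Nat.mul_one]
    omega
  · intro f hf
    rw [hA, Finset.mem_union] at hf
    rcases hf with hf | hf
    · obtain ⟨p, hp, rfl⟩ := Finset.mem_image.mp hf
      have hpne := (hmemcodes p).mp hp
      cases hb : p.2
      · -- word is u u v; use {x0, x2}
        refine ⟨{x0, x2}, by rw [Finset.card_pair hne02], ?_⟩
        intro g hg hagree
        have ha0 := hagree x0 (by simp)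
        have ha2 := hagree x2 (by simp)
        rw [hw0] at ha0
        rw [hw2, hb] at ha2; simp at ha2
        rw [hA, Finset.mem_union] at hg
        rcases hg with hg | hg
        · obtain ⟨q, hq, rfl⟩ := Finset.mem_image.mp hg
          have hqne := (hmemcodes q).mp hq
          rw [hw0] at ha0
          rw [hw2] at ha2
          cases hb' : q.2 <;> rw [hb'] at ha2 <;> simp at ha2
          · have : q = p := Prod.ext (Prod.ext ha0 ha2) (hb'.trans hb.symm)
            rw [this]
          · exact absurd (ha0.symm.trans ha2) hpne
        · obtain ⟨u, _, rfl⟩ := Finset.mem_image.mp hg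
          simp only [hcn] at ha0 ha2
          exact absurd (ha0.symm.trans ha2) hpne
      · -- word is u v u; use {x0, x1}
        refine ⟨{x0, x1}, by rw [Finset.card_pair hne01], ?_⟩
        intro g hg hagree
        have ha0 := hagree x0 (by simp)
        have ha1 := hagree x1 (by simp)
        rw [hw0] at ha0
        rw [hw1, hb] at ha1; simp at ha1
        rw [hA, Finset.mem_union] at hg
        rcases hg with hg | hg
        · obtain ⟨q, hq, rfl⟩ := Finset.mem_image.mp hg
          have hqne := (hmemcodes q).mp hq
          rw [hw0] at ha0
          rw [hw1] at ha1
          cases hb' : q.2 <;> rw [hb'] at ha1 <;> simp at ha1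
          · exact absurd (ha0.symm.trans ha1) hpne
          · have : q = p := Prod.ext (Prod.ext ha0 ha1) (hb'.trans hb.symm)
            rw [this]
        · obtain ⟨u, _, rfl⟩ := Finset.mem_image.mp hg
          simp only [hcn] at ha0 ha1
          exact absurd (ha0.symm.trans ha1) hpne
    · -- constant; use {x1, x2}
      obtain ⟨u, _, rfl⟩ := Finset.mem_image.mp hf
      refine ⟨{x1, x2}, by rw [Finset.card_pair hne12], ?_⟩
      intro g hg hagree
      have ha1 := hagree x1 (by simp)
      have ha2 := hagree x2 (by simp)
      simp only [hcn] at ha1 ha2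
      rw [hA, Finset.mem_union] at hg
      rcases hg with hg | hg
      · obtain ⟨q, hq, rfl⟩ := Finset.mem_image.mp hg
        have hqne := (hmemcodes q).mp hq
        rw [hw1] at ha1
        rw [hw2] at ha2
        cases hb' : q.2 <;> rw [hb'] at ha1 ha2 <;> simp at ha1 ha2
        · exact absurd (ha1.trans ha2.symm) hqne
        · exact absurd (ha2.trans ha1.symm) hqne
      · obtain ⟨w, _, rfl⟩ := Finset.mem_image.mp hg
        simp only [hcn] at ha1
        rw [show w = u from ha1]
end

section
/- Occ(m,2,2) ≥ 2m for m ≥ 2: there exists a set A of 2m functions from an m-element set to a 2-element set such that each function in A is uniquely determined among elements of A by its values on some 2-element subset of the domain. (Construction for m = 5: the 10 words aaaaa, abaaa, abbaa, abbba, abbbb, bbbbb, babbb, baabb, baaab, baaaa, each Occam on a suitable pair of positions.) -/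
/-- `Occ(m,2,2) ≥ 2m` for `m ≥ 2`: there exists a set `A` of `2m` functions
from an `m`-element set `X` to a 2-element alphabet (`Bool`) such that each function in `A`
is uniquely determined among elements of `A` by its values on some 2-element subset of the
domain. -/
theorem stmt9 {X : Type*} [Fintype X] [DecidableEq X] (m : ℕ)
    (hm : Fintype.card X = m) (h2 : 2 ≤ m) :
    ∃ A : Finset (X → Bool), A.card = 2 * m ∧
      ∀ f ∈ A, ∃ S : Finset X, S.card = 2 ∧
        ∀ g ∈ A, (∀ x ∈ S, g x = f x) → g = f := by
  subst hm
  set n := Fintype.card X with hn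
  let e : X ≃ Fin n := Fintype.equivFin X
  let w : Bool × Fin n → X → Bool :=
    fun p x => xor p.1 (decide (1 ≤ (e x : ℕ) ∧ (e x : ℕ) ≤ (p.2 : ℕ)))
  have hw : ∀ (p : Bool × Fin n) (i : Fin n),
      w p (e.symm i) = xor p.1 (decide (1 ≤ (i : ℕ) ∧ (i : ℕ) ≤ (p.2 : ℕ))) := by
    intro p i; simp [w]
  have hinj : Function.Injective w := by
    rintro ⟨c, k⟩ ⟨c', k'⟩ h
    have h0 : ∀ i : Fin n, xor c (decide (1 ≤ (i:ℕ) ∧ (i:ℕ) ≤ (k:ℕ)))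
        = xor c' (decide (1 ≤ (i:ℕ) ∧ (i:ℕ) ≤ (k':ℕ))) := by
      intro i; rw [← hw (c, k) i, ← hw (c', k') i, h]
    have hk := k.isLt
    have hk' := k'.isLt
    have e1 := h0 ⟨0, by omega⟩
    have e2 := h0 k
    have e3 := h0 k'
    cases c <;> cases c' <;> simp only [Bool.false_xor, Bool.true_xor, ← decide_not, decide_eq_decide] at e1 e2 e3 <;>
      first
      | exact congrArg (Prod.mk _) (Fin.ext (by omega))
      | (exfalso; omega)
  refine ⟨Finset.image w Finset.univ, ?_, ?_⟩
  · rw [Finset.card_image_of_injective _ hinj, Finset.card_univ, Fintype.card_prod,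
      Fintype.card_bool, Fintype.card_fin]
  · rintro f hf
    obtain ⟨⟨c, k⟩, -, rfl⟩ := Finset.mem_image.mp hf
    have hk := k.isLt
    by_cases hcase : (k : ℕ) + 1 < n
    · -- S = {pos k, pos k+1}
      refine ⟨{e.symm k, e.symm ⟨(k:ℕ)+1, hcase⟩}, ?_, ?_⟩
      · rw [Finset.card_pair]
        intro hh
        have := e.symm.injective hh
        have : (k : ℕ) = (k:ℕ) + 1 := congrArg Fin.val this
        omega
      · rintro g hg hag
        obtain ⟨⟨c', k'⟩, -, rfl⟩ := Finset.mem_image.mp hg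
        have hk' := k'.isLt
        have a1 := hag (e.symm k) (by simp)
        have a2 := hag (e.symm ⟨(k:ℕ)+1, hcase⟩) (by simp)
        rw [hw, hw] at a1
        rw [hw, hw] at a2
        have : (c', k') = (c, k) := by
          cases c <;> cases c' <;> simp only [Bool.false_xor, Bool.true_xor, ← decide_not, decide_eq_decide] at a1 a2 <;>
            first
            | exact congrArg (Prod.mk _) (Fin.ext (by omega))
            | (exfalso; omega)
        rw [this]
    · -- k = n-1, S = {pos k, pos 0}
      have hkn : (k : ℕ) + 1 = n := by omega
      refine ⟨{e.symm k, e.symm ⟨0, by omega⟩}, ?_, ?_⟩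
      · rw [Finset.card_pair]
        intro hh
        have := e.symm.injective hh
        have : (k : ℕ) = 0 := congrArg Fin.val this
        omega
      · rintro g hg hag
        obtain ⟨⟨c', k'⟩, -, rfl⟩ := Finset.mem_image.mp hg
        have hk' := k'.isLt
        have a1 := hag (e.symm k) (by simp)
        have a2 := hag (e.symm ⟨0, by omega⟩) (by simp)
        rw [hw, hw] at a1
        rw [hw, hw] at a2
        have : (c', k') = (c, k) := by
          cases c <;> cases c' <;> simp only [Bool.false_xor, Bool.true_xor, ← decide_not, decide_eq_decide] at a1 a2 <;>
            first
            | exact congrArg (Prod.mk _) (Fin.ext (by omega))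
            | (exfalso; omega)
        rw [this]
end

section
/- Let G be a group and S ⊆ G. The fusion set F_S of S with respect to the poset (A_G, ⊆) of characteristic functions of subgroups ordered by inclusion equals {χ_{⟨R⟩} | R ⊆ S}, i.e., a subgroup H's characteristic function is Occam on S (H is the smallest subgroup K with K ∩ S = H ∩ S) if and only if H is generated by some subset of S. -/
/-- For a group `G` and `S ⊆ G`, the fusion set of `S` with respect to the
poset of subgroups ordered by inclusion equals `{⟨R⟩ | R ⊆ S}`: a subgroup `H` is the least
element of `{K | K ∩ S = H ∩ S}` if and only if `H` is generated by some subset of `S`. -/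
theorem stmt17 {G : Type*} [Group G] (S : Set G) (H : Subgroup G) :
    IsLeast {K : Subgroup G | ∀ g ∈ S, (g ∈ K ↔ g ∈ H)} H ↔
    ∃ R ⊆ S, Subgroup.closure R = H := by
  constructor
  · rintro ⟨hmem, hlb⟩
    refine ⟨S ∩ (H : Set G), Set.inter_subset_left, le_antisymm ?_ ?_⟩
    · exact (Subgroup.closure_le H).2 Set.inter_subset_right
    · apply hlb
      intro g hg
      constructor
      · intro hgc
        exact (Subgroup.closure_le H).2 Set.inter_subset_right hgc
      · intro hgH
        exact Subgroup.subset_closure ⟨hg, hgH⟩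
  · rintro ⟨R, hRS, rfl⟩
    constructor
    · intro g _; rfl
    · intro K hK
      apply (Subgroup.closure_le K).2
      intro r hr
      exact (hK r (hRS hr)).2 (Subgroup.subset_closure hr)
end

section
/- If G is a group of finite rank n, then F₀ = 2ⁿ, where F₀ = min{ |F_S| : χ_G ∈ F_S } is the fusion number of the maximal element of (A_G, ⊆). Equivalently, the minimum over generating sets S of G of the number of distinct subgroups of G generated by subsets of S equals 2^{rank(G)}. -/
open Subgroup

/-- Every element of a closure lies in the closure of a finite subset. -/
lemma aux_mem_closure_finset {G : Type*} [Group G] {S : Set G} {x : G}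
    (hx : x ∈ Subgroup.closure S) :
    ∃ T : Finset G, ↑T ⊆ S ∧ x ∈ Subgroup.closure (↑T : Set G) := by
  classical
  induction hx using closure_induction with
  | mem y hy => exact ⟨{y}, by simpa using hy, subset_closure (by simp)⟩
  | one => exact ⟨∅, by simp, one_mem _⟩
  | mul x y hx hy ihx ihy =>
    obtain ⟨A, hAS, hA⟩ := ihx
    obtain ⟨B, hBS, hB⟩ := ihy
    refine ⟨A ∪ B, by simp [Set.union_subset_iff, hAS, hBS], ?_⟩
    have hA' : x ∈ closure (↑(A ∪ B) : Set G) :=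
      closure_mono (by simp [Set.subset_union_left]) hA
    have hB' : y ∈ closure (↑(A ∪ B) : Set G) :=
      closure_mono (by simp [Set.subset_union_right]) hB
    exact mul_mem hA' hB'
  | inv x hx ih =>
    obtain ⟨A, hAS, hA⟩ := ih
    exact ⟨A, hAS, inv_mem hA⟩

/-- If `S` generates an f.g. group, some finite subset of `S` generates it. -/
lemma aux_exists_finset {G : Type*} [Group G] [Group.FG G] {S : Set G}
    (hS : Subgroup.closure S = ⊤) :
    ∃ T : Finset G, ↑T ⊆ S ∧ Subgroup.closure (↑T : Set G) = ⊤ := by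
  classical
  obtain ⟨F, -, hFtop⟩ := Group.rank_spec G
  choose f hf1 hf2 using fun x : G => aux_mem_closure_finset (S := S) (x := x)
  have hmem : ∀ x : G, x ∈ Subgroup.closure S := fun x => hS ▸ Subgroup.mem_top x
  refine ⟨F.biUnion (fun x => f x (hmem x)), ?_, ?_⟩
  · intro y hy
    simp only [Finset.coe_biUnion, Set.mem_iUnion, Finset.mem_coe] at hy
    obtain ⟨x, -, hx⟩ := hy
    exact hf1 x (hmem x) hx
  · rw [eq_top_iff, ← hFtop]
    rw [closure_le]
    intro x hx
    have : x ∈ closure (↑(f x (hmem x)) : Set G) := hf2 x (hmem x)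
    exact closure_mono (by
      intro y hy
      simp only [Finset.coe_biUnion, Set.mem_iUnion, Finset.mem_coe]
      exact ⟨x, hx, hy⟩) this

/-- Lower bound: any generating set yields at least `2 ^ rank G` closures of subsets. -/
lemma aux_lower {G : Type*} [Group G] [Group.FG G] {S : Set G}
    (hS : Subgroup.closure S = ⊤) :
    (2 : ℕ∞) ^ Group.rank G ≤
      {H : Subgroup G | ∃ R ⊆ S, Subgroup.closure R = H}.encard := by
  classical
  set Kset : Set ℕ := {k | ∃ T : Finset G, ↑T ⊆ S ∧ Subgroup.closure (↑T : Set G) = ⊤ ∧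
    T.card = k} with hKset
  have hne : Kset.Nonempty := by
    obtain ⟨T, hTS, hTtop⟩ := aux_exists_finset hS
    exact ⟨T.card, T, hTS, hTtop, rfl⟩
  obtain ⟨T, hTS, hTtop, hTcard⟩ := Nat.sInf_mem hne
  have hrank : Group.rank G ≤ sInf Kset := hTcard ▸ Group.rank_le hTtop
  -- minimality step
  have step : ∀ A B : Finset G, A ⊆ T → B ⊆ T →
      Subgroup.closure (↑A : Set G) ≤ Subgroup.closure (↑B : Set G) → A ⊆ B := by
    intro A B hA hB hle s hs
    by_contra hsB
    have hsT : s ∈ T := hA hs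
    have hsclB : s ∈ Subgroup.closure (↑B : Set G) :=
      hle (subset_closure (by simpa using hs))
    have hBer : B ⊆ T.erase s := fun t ht =>
      Finset.mem_erase.mpr ⟨fun h => hsB (h ▸ ht), hB ht⟩
    have hscl : s ∈ Subgroup.closure (↑(T.erase s) : Set G) :=
      closure_mono (by exact_mod_cast hBer) hsclB
    have hsub : (↑T : Set G) ⊆ ↑(Subgroup.closure (↑(T.erase s) : Set G)) := by
      intro t ht
      by_cases h : t = s
      · subst h; exact hscl
      · exact subset_closure (by
          simp only [Finset.coe_erase, Set.mem_diff, Set.mem_singleton_iff]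
          exact ⟨ht, h⟩)
    have htop : Subgroup.closure (↑(T.erase s) : Set G) = ⊤ := by
      have := (closure_le _).mpr hsub
      rw [hTtop] at this
      exact top_le_iff.mp this
    have hmem' : (T.erase s).card ∈ Kset :=
      ⟨T.erase s, fun t ht => hTS (Finset.mem_coe.mpr (Finset.erase_subset s T
        (Finset.mem_coe.mp ht))), htop, rfl⟩
    have h1 : sInf Kset ≤ (T.erase s).card := Nat.sInf_le hmem'
    have h2 : (T.erase s).card = T.card - 1 := Finset.card_erase_of_mem hsT
    have h3 : 0 < T.card := Finset.card_pos.mpr ⟨s, hsT⟩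
    omega
  have hinj : Set.InjOn (fun A : Finset G => Subgroup.closure (↑A : Set G))
      ↑T.powerset := by
    intro A hA B hB hAB
    simp only [Finset.coe_powerset, Set.mem_preimage, Set.mem_powerset_iff,
      Finset.coe_subset, Finset.mem_coe, Finset.mem_powerset] at hA hB
    have hA' : A ⊆ T := by simpa using hA
    have hB' : B ⊆ T := by simpa using hB
    exact le_antisymm (step A B hA' hB' (le_of_eq hAB)) (step B A hB' hA' (le_of_eq hAB.symm))
  set P : Finset (Subgroup G) := Finset.image (fun A : Finset G => Subgroup.closure (A : Set G)) T.powerset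
    with hP
  have hPcard : P.card = 2 ^ T.card := by
    rw [hP, Finset.card_image_of_injOn hinj, Finset.card_powerset]
  have hPsub : (↑P : Set (Subgroup G)) ⊆
      {H : Subgroup G | ∃ R ⊆ S, Subgroup.closure R = H} := by
    intro H hH
    simp only [hP, Finset.coe_image, Set.mem_image, Finset.mem_coe, Finset.mem_powerset] at hH
    obtain ⟨A, hAT, hAH⟩ := hH
    exact ⟨↑A, fun x hx => hTS (Finset.mem_coe.mpr (hAT (Finset.mem_coe.mp hx))), hAH⟩
  calc (2 : ℕ∞) ^ Group.rank G ≤ (2 : ℕ∞) ^ T.card := by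
        have : (2 ^ Group.rank G : ℕ) ≤ (2 ^ T.card : ℕ) :=
          Nat.pow_le_pow_right (by norm_num) (hTcard ▸ hrank)
        exact_mod_cast this
    _ = ((P.card : ℕ) : ℕ∞) := by exact_mod_cast hPcard.symm
    _ = (↑P : Set (Subgroup G)).encard := (Set.encard_coe_eq_coe_finsetCard P).symm
    _ ≤ _ := Set.encard_mono hPsub

/-- Upper bound for a finite generating set. -/
lemma aux_upper {G : Type*} [Group G] (T : Finset G) :
    {H : Subgroup G | ∃ R ⊆ (↑T : Set G), Subgroup.closure R = H}.encard ≤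
      (2 : ℕ∞) ^ T.card := by
  classical
  set P : Finset (Subgroup G) := Finset.image (fun A : Finset G => Subgroup.closure (A : Set G)) T.powerset
    with hP
  have hsub : {H : Subgroup G | ∃ R ⊆ (↑T : Set G), Subgroup.closure R = H} ⊆ ↑P := by
    intro H hH
    obtain ⟨R, hRT, hRH⟩ := hH
    have hRfin : R.Finite := T.finite_toSet.subset hRT
    refine Finset.mem_coe.mpr (Finset.mem_image.mpr ⟨hRfin.toFinset, ?_, ?_⟩)
    · rw [Finset.mem_powerset]
      intro x hx
      exact Finset.mem_coe.mp (hRT (hRfin.mem_toFinset.mp hx))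
    · rw [Set.Finite.coe_toFinset]; exact hRH
  calc {H : Subgroup G | ∃ R ⊆ (↑T : Set G), Subgroup.closure R = H}.encard
      ≤ (↑P : Set (Subgroup G)).encard := Set.encard_mono hsub
    _ = ((P.card : ℕ) : ℕ∞) := Set.encard_coe_eq_coe_finsetCard P
    _ ≤ ((2 ^ T.card : ℕ) : ℕ∞) := by
        exact_mod_cast (Finset.card_image_le.trans (le_of_eq (Finset.card_powerset T)))
    _ = (2 : ℕ∞) ^ T.card := by push_cast; ring

/-- If `G` is a group of finite rank `n`, then `F₀ = 2ⁿ`: the minimum, over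
generating sets `S` of `G`, of the number of distinct subgroups of `G` generated by subsets
of `S`, equals `2 ^ rank(G)`. -/
theorem stmt18 (G : Type*) [Group G] [Group.FG G] :
    sInf {c : ℕ∞ | ∃ S : Set G, Subgroup.closure S = ⊤ ∧
      {H : Subgroup G | ∃ R ⊆ S, Subgroup.closure R = H}.encard = c} =
    2 ^ Group.rank G := by
  obtain ⟨T, hTcard, hTtop⟩ := Group.rank_spec G
  apply le_antisymm
  · apply sInf_le
    refine ⟨↑T, hTtop, le_antisymm ?_ ?_⟩
    · calc {H : Subgroup G | ∃ R ⊆ (↑T : Set G), Subgroup.closure R = H}.encard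
          ≤ (2 : ℕ∞) ^ T.card := aux_upper T
        _ = (2 : ℕ∞) ^ Group.rank G := by rw [hTcard]
    · exact aux_lower hTtop
  · apply le_sInf
    rintro c ⟨S, hS, rfl⟩
    exact aux_lower hS
end
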